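/- Let π: E → B be a continuous map between topological spaces having the homotopy lifting property with respect to all topological spaces (i.e., for every space Y, every continuous H₀: Y → E and h: [0,1]×Y → B with π∘H₀ = h(0,·), there is a continuous H: [0,1]×Y → E with H(0,·) = H₀ and π∘H = h). Let U ⊆ B be an open set admitting a contraction, i.e., a continuous map c: [0,1]×U → U with c(0,u) = u for all u and c(1,u) = b for a fixed point b ∈ U. Set E_U = π^{-1}(U), π_U = π|_{E_U}, F = π^{-1}(b). Then there exist continuous maps Φ: E_U → U×F and Φ′: U×F → E_U with pr_U∘Φ = π_U and π_U∘Φ′ = pr_U, together with continuous homotopies H: [0,1]×E_U → E_U and H′: [0,1]×U×F → U×F satisfying π_U(H(t,e)) = π_U(e), pr_U(H′(t,u,y)) = u, H(0,·) = id, H(1,·) = Φ′∘Φ, H′(0,·) = id, and H′(1,·) = Φ∘Φ′. In other words, π is fiber homotopy trivial over every contractible open subset of B. -/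
import Mathlib


open unitInterval

private lemma symm_projIcc' (x : ℝ) :
    unitInterval.symm (Set.projIcc 0 1 zero_le_one x) = Set.projIcc 0 1 zero_le_one (1 - x) := by
  apply Subtype.ext
  rw [unitInterval.coe_symm_eq, Set.coe_projIcc, Set.coe_projIcc]
  rcases le_total x 0 with h | h
  · rw [min_eq_right (h.trans zero_le_one), max_eq_left h, min_eq_left (by linarith),
      max_eq_right zero_le_one]
    norm_num
  · rcases le_total x 1 with h1 | h1
    · rw [min_eq_right h1, max_eq_right h, min_eq_right (by linarith), max_eq_right (by linarith)]
    · rw [min_eq_left h1, max_eq_right zero_le_one, min_eq_right (by linarith),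
        max_eq_left (by linarith)]
      norm_num

/-- a map `π : E → B` with the homotopy lifting property with respect to all
topological spaces is fiber homotopy trivial over every contractible open subset `U ⊆ B`:
there are fiberwise maps `Φ : E_U → U × F`, `Φ' : U × F → E_U` and fiberwise homotopies
from the identity maps to `Φ' ∘ Φ` and `Φ ∘ Φ'`. -/
theorem stmt9.{u} {E B : Type u} [TopologicalSpace E] [TopologicalSpace B]
    (π : E → B) (hπ : Continuous π)
    (hlp : ∀ (Y : Type u) [TopologicalSpace Y] (H0 : Y → E) (h : I × Y → B),
      Continuous H0 → Continuous h → (∀ y, π (H0 y) = h (0, y)) →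
      ∃ H : I × Y → E, Continuous H ∧ (∀ y, H (0, y) = H0 y) ∧ ∀ p, π (H p) = h p)
    (U : Set B) (hU : IsOpen U) (b : B) (hb : b ∈ U)
    (c : I × U → U) (hc : Continuous c)
    (hc0 : ∀ u : U, c (0, u) = u) (hc1 : ∀ u : U, c (1, u) = ⟨b, hb⟩) :
    ∃ (Φ : {e : E // π e ∈ U} → U × {e : E // π e = b})
      (Φ' : U × {e : E // π e = b} → {e : E // π e ∈ U})
      (H : I × {e : E // π e ∈ U} → {e : E // π e ∈ U})
      (H' : I × (U × {e : E // π e = b}) → U × {e : E // π e = b}),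
      Continuous Φ ∧ Continuous Φ' ∧ Continuous H ∧ Continuous H' ∧
      (∀ e, ((Φ e).1 : B) = π e.1) ∧
      (∀ p, π (Φ' p).1 = (p.1 : B)) ∧
      (∀ t e, π (H (t, e)).1 = π e.1) ∧
      (∀ t p, ((H' (t, p)).1 : B) = (p.1 : B)) ∧
      (∀ e, H (0, e) = e) ∧ (∀ e, H (1, e) = Φ' (Φ e)) ∧
      (∀ p, H' (0, p) = p) ∧ (∀ p, H' (1, p) = Φ (Φ' p)) := by
  -- Step 1
  obtain ⟨Htil, Htil_cont, Htil0, Htilπ⟩ :=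
    hlp {e : E // π e ∈ U} (fun e => e.1)
      (fun p => (c (p.1, ⟨π p.2.1, p.2.2⟩) : B))
      continuous_subtype_val
      (by
        apply continuous_subtype_val.comp
        exact hc.comp (continuous_fst.prodMk
          (((hπ.comp continuous_subtype_val).comp continuous_snd).subtype_mk _)))
      (fun e => by show π e.1 = ↑(c (0, ⟨π e.1, e.2⟩)); rw [hc0])
  -- Step 2
  obtain ⟨G, G_cont, G0, Gπ⟩ :=
    hlp (U × {e : E // π e = b}) (fun p => p.2.1)
      (fun q => (c (unitInterval.symm q.1, q.2.1) : B))
      (continuous_subtype_val.comp continuous_snd)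
      (by
        apply continuous_subtype_val.comp
        exact hc.comp ((continuous_symm.comp continuous_fst).prodMk
          (continuous_fst.comp continuous_snd)))
      (fun p => by show π p.2.1 = ↑(c (σ 0, p.1)); rw [unitInterval.symm_zero, hc1]; exact p.2.2)
  -- Φ and Φ'
  set Φ : {e : E // π e ∈ U} → U × {e : E // π e = b} :=
    fun e => (⟨π e.1, e.2⟩, ⟨Htil (1, e), by
      show π (Htil (1, e)) = b
      rw [Htilπ (1, e)]
      show ((c (1, ⟨π e.1, e.2⟩) : U) : B) = b
      rw [hc1]⟩) with hΦ
  set Φ' : U × {e : E // π e = b} → {e : E // π e ∈ U} :=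
    fun p => ⟨G (1, p), by
      show π (G (1, p)) ∈ U
      rw [Gπ (1, p)]
      show ((c (σ 1, p.1) : U) : B) ∈ U
      rw [unitInterval.symm_one, hc0]; exact p.1.2⟩ with hΦ'
  have Φ_cont : Continuous Φ := by
    refine Continuous.prodMk ?_ ?_
    · exact ((hπ.comp continuous_subtype_val).subtype_mk _)
    · exact (Htil_cont.comp (continuous_const.prodMk continuous_id)).subtype_mk _
  have Φ'_cont : Continuous Φ' :=
    (G_cont.comp (continuous_const.prodMk continuous_id)).subtype_mk _
  have Φ'π : ∀ p, π (Φ' p).1 = (p.1 : B) := fun p => by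
    show π (G (1, p)) = _
    rw [Gπ (1, p)]
    show ((c (σ 1, p.1) : U) : B) = (p.1 : B)
    rw [unitInterval.symm_one, hc0]
  -- projection onto I
  set pr : ℝ → I := Set.projIcc (0:ℝ) 1 zero_le_one with hpr
  have pr_cont : Continuous pr := continuous_projIcc
  have pr0 : pr 0 = 0 := Subtype.ext (by simp [hpr, Set.coe_projIcc])
  have pr1 : pr 1 = 1 := Subtype.ext (by norm_num [hpr, Set.coe_projIcc])
  have sympr : ∀ x : ℝ, σ (pr x) = pr (1 - x) := fun x => by rw [hpr]; exact symm_projIcc' x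
  -- Step 3 : concatenated lift over E_U
  set P : I → {e : E // π e ∈ U} → E := fun t e =>
    if (t : ℝ) ≤ 1/2 then Htil (pr (2*t), e) else G (pr (2*t - 1), Φ e) with hP
  have P_cont : Continuous (fun q : I × {e : E // π e ∈ U} => P q.1 q.2) := by
    simp only [hP]
    apply Continuous.if_le
    · exact Htil_cont.comp ((pr_cont.comp (by fun_prop)).prodMk continuous_snd)
    · exact G_cont.comp ((pr_cont.comp (by fun_prop)).prodMk (Φ_cont.comp continuous_snd))
    · exact continuous_subtype_val.comp continuous_fst
    · exact continuous_const
    · intro q hq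
      have h2' : 2*(q.1:ℝ) - 1 = 0 := by linarith
      have h2 : 2*(q.1:ℝ) = 1 := by linarith
      rw [h2', h2, pr0, pr1, G0]
  obtain ⟨K, K_cont, K0, Kπ⟩ :=
    hlp (I × {e : E // π e ∈ U}) (fun q => P q.1 q.2)
      (fun q => (c (pr ((1 - q.1) * min (2*(q.2.1:ℝ)) (2 - 2*(q.2.1:ℝ))), ⟨π q.2.2.1, q.2.2.2⟩) : B))
      P_cont
      (by
        apply continuous_subtype_val.comp
        apply hc.comp
        apply Continuous.prodMk
        · apply pr_cont.comp
          fun_prop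
        · exact ((hπ.comp continuous_subtype_val).comp
            (continuous_snd.comp continuous_snd)).subtype_mk _)
      (by
        rintro ⟨t, e⟩
        show π (P t e) = ↑(c (pr ((1 - ((0:I):ℝ)) * min (2*(t:ℝ)) (2 - 2*(t:ℝ))), ⟨π e.1, e.2⟩))
        rw [Set.Icc.coe_zero, sub_zero, one_mul]
        by_cases ht : (t:ℝ) ≤ 1/2
        · rw [hP]
          show π (if (t : ℝ) ≤ 1/2 then Htil (pr (2*t), e) else G (pr (2*t - 1), Φ e)) = _
          rw [if_pos ht, Htilπ, min_eq_left (by linarith)]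
        · rw [hP]
          show π (if (t : ℝ) ≤ 1/2 then Htil (pr (2*t), e) else G (pr (2*t - 1), Φ e)) = _
          rw [if_neg ht, Gπ]
          show ((c (σ (pr (2*(t:ℝ) - 1)), ⟨π e.1, e.2⟩) : U) : B) = _
          rw [sympr, min_eq_right (by linarith)]
          have : (1:ℝ) - (2*(t:ℝ) - 1) = 2 - 2*(t:ℝ) := by ring
          rw [this])
  -- Hbar and H
  set Hbar : I → {e : E // π e ∈ U} → E := fun t e =>
    if (t : ℝ) ≤ 1/3 then K (pr (3*t), (0, e))
    else if (t : ℝ) ≤ 2/3 then K (1, (pr (3*t - 1), e))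
    else K (pr (3 - 3*t), (1, e)) with hHbar
  have Hbar_cont : Continuous (fun q : I × {e : E // π e ∈ U} => Hbar q.1 q.2) := by
    simp only [hHbar]
    apply Continuous.if_le
    · exact K_cont.comp ((pr_cont.comp (by fun_prop)).prodMk
        (continuous_const.prodMk continuous_snd))
    · apply Continuous.if_le
      · exact K_cont.comp (continuous_const.prodMk
          ((pr_cont.comp (by fun_prop)).prodMk continuous_snd))
      · exact K_cont.comp ((pr_cont.comp (by fun_prop)).prodMk
          (continuous_const.prodMk continuous_snd))
      · exact continuous_subtype_val.comp continuous_fst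
      · exact continuous_const
      · intro q hq
        have e1 : 3*(q.1:ℝ) - 1 = 1 := by linarith
        have e2 : 3 - 3*(q.1:ℝ) = 1 := by linarith
        rw [e1, e2, pr1]
    · exact continuous_subtype_val.comp continuous_fst
    · exact continuous_const
    · intro q hq
      rw [if_pos (show (q.1:ℝ) ≤ 2/3 by rw [hq]; norm_num)]
      have e2 : 3*(q.1:ℝ) - 1 = 0 := by linarith
      have e1 : 3*(q.1:ℝ) = 1 := by linarith
      rw [e2, e1, pr0, pr1]
  have Hbarπ : ∀ t e, π (Hbar t e) = π e.1 := by
    intro t e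
    have key : ∀ (s t' : I), (1 - (s:ℝ)) * min (2*(t':ℝ)) (2 - 2*(t':ℝ)) = 0 →
        π (K (s, (t', e))) = π e.1 := by
      intro s t' h0
      rw [Kπ]
      show ((c (pr ((1 - (s:ℝ)) * min (2*(t':ℝ)) (2 - 2*(t':ℝ))), ⟨π e.1, e.2⟩) : U) : B) = _
      rw [h0, pr0, hc0]
    rw [hHbar]
    show π (if (t : ℝ) ≤ 1/3 then K (pr (3*t), (0, e))
      else if (t : ℝ) ≤ 2/3 then K (1, (pr (3*t - 1), e))
      else K (pr (3 - 3*t), (1, e))) = _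
    split_ifs with h1 h2
    · exact key _ _ (by norm_num)
    · exact key _ _ (by norm_num)
    · exact key _ _ (by norm_num)
  set H : I × {e : E // π e ∈ U} → {e : E // π e ∈ U} :=
    fun q => ⟨Hbar q.1 q.2, by rw [Hbarπ]; exact q.2.2⟩ with hH
  have H_cont : Continuous H := Hbar_cont.subtype_mk _
  have Hπ : ∀ t e, π (H (t, e)).1 = π e.1 := fun t e => Hbarπ t e
  have H0' : ∀ e, H (0, e) = e := by
    intro e
    apply Subtype.ext
    show Hbar 0 e = e.1
    rw [hHbar]
    show (if ((0:I) : ℝ) ≤ 1/3 then K (pr (3*(0:I)), (0, e))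
      else if ((0:I) : ℝ) ≤ 2/3 then K (1, (pr (3*(0:I) - 1), e))
      else K (pr (3 - 3*(0:I)), (1, e))) = e.1
    rw [if_pos (by norm_num : ((0:I):ℝ) ≤ 1/3)]
    have h3 : (3:ℝ)*((0:I):ℝ) = 0 := by norm_num
    rw [h3, pr0, K0]
    show P 0 e = e.1
    rw [hP]
    show (if ((0:I) : ℝ) ≤ 1/2 then Htil (pr (2*(0:I)), e) else G (pr (2*(0:I) - 1), Φ e)) = e.1
    rw [if_pos (by norm_num : ((0:I):ℝ) ≤ 1/2)]
    have h2 : (2:ℝ)*((0:I):ℝ) = 0 := by norm_num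
    rw [h2, pr0, Htil0]
  have H1' : ∀ e, H (1, e) = Φ' (Φ e) := by
    intro e
    apply Subtype.ext
    show Hbar 1 e = (Φ' (Φ e)).1
    rw [hHbar]
    show (if ((1:I) : ℝ) ≤ 1/3 then K (pr (3*(1:I)), (0, e))
      else if ((1:I) : ℝ) ≤ 2/3 then K (1, (pr (3*(1:I) - 1), e))
      else K (pr (3 - 3*(1:I)), (1, e))) = (Φ' (Φ e)).1
    rw [if_neg (by norm_num : ¬ ((1:I):ℝ) ≤ 1/3), if_neg (by norm_num : ¬ ((1:I):ℝ) ≤ 2/3)]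
    have h3 : (3:ℝ) - 3*((1:I):ℝ) = 0 := by norm_num
    rw [h3, pr0, K0]
    show P 1 e = (Φ' (Φ e)).1
    rw [hP]
    show (if ((1:I) : ℝ) ≤ 1/2 then Htil (pr (2*(1:I)), e) else G (pr (2*(1:I) - 1), Φ e))
      = (Φ' (Φ e)).1
    rw [if_neg (by norm_num : ¬ ((1:I):ℝ) ≤ 1/2)]
    have h2 : (2:ℝ)*((1:I):ℝ) - 1 = 1 := by norm_num
    rw [h2, pr1]
  -- Step 4 : concatenated lift over U × F
  set Q : I → U × {e : E // π e = b} → E := fun t p =>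
    if (t : ℝ) ≤ 1/2 then G (pr (2*t), p) else Htil (pr (2*t - 1), Φ' p) with hQ
  have Q_cont : Continuous (fun q : I × (U × {e : E // π e = b}) => Q q.1 q.2) := by
    simp only [hQ]
    apply Continuous.if_le
    · exact G_cont.comp ((pr_cont.comp (by fun_prop)).prodMk continuous_snd)
    · exact Htil_cont.comp ((pr_cont.comp (by fun_prop)).prodMk (Φ'_cont.comp continuous_snd))
    · exact continuous_subtype_val.comp continuous_fst
    · exact continuous_const
    · intro q hq
      have h2' : 2*(q.1:ℝ) - 1 = 0 := by linarith
      have h2 : 2*(q.1:ℝ) = 1 := by linarith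
      rw [h2', h2, pr0, pr1, Htil0]
  have hU1 : ∀ p : U × {e : E // π e = b},
      (⟨π (Φ' p).1, (Φ' p).2⟩ : U) = p.1 := fun p => Subtype.ext (Φ'π p)
  obtain ⟨K', K'_cont, K'0, K'π⟩ :=
    hlp (I × (U × {e : E // π e = b})) (fun q => Q q.1 q.2)
      (fun q => (c (pr ((1 - q.1) * |2*(q.2.1:ℝ) - 1| + q.1), q.2.2.1) : B))
      Q_cont
      (by
        apply continuous_subtype_val.comp
        apply hc.comp
        apply Continuous.prodMk
        · apply pr_cont.comp
          fun_prop
        · exact continuous_fst.comp (continuous_snd.comp continuous_snd))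
      (by
        rintro ⟨t, p⟩
        show π (Q t p) = ↑(c (pr ((1 - ((0:I):ℝ)) * |2*(t:ℝ) - 1| + ((0:I):ℝ)), p.1))
        rw [Set.Icc.coe_zero, sub_zero, one_mul, add_zero]
        by_cases ht : (t:ℝ) ≤ 1/2
        · rw [hQ]
          show π (if (t : ℝ) ≤ 1/2 then G (pr (2*t), p) else Htil (pr (2*t - 1), Φ' p)) = _
          rw [if_pos ht, Gπ]
          show ((c (σ (pr (2*(t:ℝ))), p.1) : U) : B) = _
          rw [sympr]
          have : |2*(t:ℝ) - 1| = 1 - 2*(t:ℝ) := by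
            rw [abs_of_nonpos (by linarith)]; ring
          rw [this]
        · rw [hQ]
          show π (if (t : ℝ) ≤ 1/2 then G (pr (2*t), p) else Htil (pr (2*t - 1), Φ' p)) = _
          rw [if_neg ht, Htilπ]
          show ((c (pr (2*(t:ℝ) - 1), ⟨π (Φ' p).1, (Φ' p).2⟩) : U) : B) = _
          rw [hU1]
          have : |2*(t:ℝ) - 1| = 2*(t:ℝ) - 1 := abs_of_nonneg (by linarith)
          rw [this])
  -- K'bar and H'
  set K'bar : I → U × {e : E // π e = b} → E := fun t p =>
    if (t : ℝ) ≤ 1/3 then K' (pr (3*t), (0, p))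
    else if (t : ℝ) ≤ 2/3 then K' (1, (pr (3*t - 1), p))
    else K' (pr (3 - 3*t), (1, p)) with hK'bar
  have K'bar_cont : Continuous (fun q : I × (U × {e : E // π e = b}) => K'bar q.1 q.2) := by
    simp only [hK'bar]
    apply Continuous.if_le
    · exact K'_cont.comp ((pr_cont.comp (by fun_prop)).prodMk
        (continuous_const.prodMk continuous_snd))
    · apply Continuous.if_le
      · exact K'_cont.comp (continuous_const.prodMk
          ((pr_cont.comp (by fun_prop)).prodMk continuous_snd))
      · exact K'_cont.comp ((pr_cont.comp (by fun_prop)).prodMk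
          (continuous_const.prodMk continuous_snd))
      · exact continuous_subtype_val.comp continuous_fst
      · exact continuous_const
      · intro q hq
        have e1 : 3*(q.1:ℝ) - 1 = 1 := by linarith
        have e2 : 3 - 3*(q.1:ℝ) = 1 := by linarith
        rw [e1, e2, pr1]
    · exact continuous_subtype_val.comp continuous_fst
    · exact continuous_const
    · intro q hq
      rw [if_pos (show (q.1:ℝ) ≤ 2/3 by rw [hq]; norm_num)]
      have e2 : 3*(q.1:ℝ) - 1 = 0 := by linarith
      have e1 : 3*(q.1:ℝ) = 1 := by linarith
      rw [e2, e1, pr0, pr1]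
  have K'barπ : ∀ t p, π (K'bar t p) = b := by
    intro t p
    have key : ∀ (s t' : I), (1 - (s:ℝ)) * |2*(t':ℝ) - 1| + (s:ℝ) = 1 →
        π (K' (s, (t', p))) = b := by
      intro s t' h0
      rw [K'π]
      show ((c (pr ((1 - (s:ℝ)) * |2*(t':ℝ) - 1| + (s:ℝ)), p.1) : U) : B) = b
      rw [h0, pr1, hc1]
    rw [hK'bar]
    show π (if (t : ℝ) ≤ 1/3 then K' (pr (3*t), (0, p))
      else if (t : ℝ) ≤ 2/3 then K' (1, (pr (3*t - 1), p))
      else K' (pr (3 - 3*t), (1, p))) = b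
    split_ifs with h1 h2
    · refine key _ _ ?_
      have : |2*((0:I):ℝ) - 1| = 1 := by norm_num
      rw [this]; ring
    · refine key _ _ ?_
      norm_num
    · refine key _ _ ?_
      have : |2*((1:I):ℝ) - 1| = 1 := by norm_num
      rw [this]; ring
  set H' : I × (U × {e : E // π e = b}) → U × {e : E // π e = b} :=
    fun q => (q.2.1, ⟨K'bar q.1 q.2, K'barπ q.1 q.2⟩) with hH'
  have H'_cont : Continuous H' :=
    (continuous_fst.comp continuous_snd).prodMk (K'bar_cont.subtype_mk _)
  have H'0 : ∀ p, H' (0, p) = p := by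
    intro p
    refine Prod.ext rfl (Subtype.ext ?_)
    show K'bar 0 p = p.2.1
    rw [hK'bar]
    show (if ((0:I) : ℝ) ≤ 1/3 then K' (pr (3*(0:I)), (0, p))
      else if ((0:I) : ℝ) ≤ 2/3 then K' (1, (pr (3*(0:I) - 1), p))
      else K' (pr (3 - 3*(0:I)), (1, p))) = p.2.1
    rw [if_pos (by norm_num : ((0:I):ℝ) ≤ 1/3)]
    have h3 : (3:ℝ)*((0:I):ℝ) = 0 := by norm_num
    rw [h3, pr0, K'0]
    show Q 0 p = p.2.1
    rw [hQ]
    show (if ((0:I) : ℝ) ≤ 1/2 then G (pr (2*(0:I)), p) else Htil (pr (2*(0:I) - 1), Φ' p)) = p.2.1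
    rw [if_pos (by norm_num : ((0:I):ℝ) ≤ 1/2)]
    have h2 : (2:ℝ)*((0:I):ℝ) = 0 := by norm_num
    rw [h2, pr0, G0]
  have H'1 : ∀ p, H' (1, p) = Φ (Φ' p) := by
    intro p
    refine Prod.ext (Subtype.ext (Φ'π p).symm) (Subtype.ext ?_)
    show K'bar 1 p = Htil (1, Φ' p)
    rw [hK'bar]
    show (if ((1:I) : ℝ) ≤ 1/3 then K' (pr (3*(1:I)), (0, p))
      else if ((1:I) : ℝ) ≤ 2/3 then K' (1, (pr (3*(1:I) - 1), p))
      else K' (pr (3 - 3*(1:I)), (1, p))) = Htil (1, Φ' p)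
    rw [if_neg (by norm_num : ¬ ((1:I):ℝ) ≤ 1/3), if_neg (by norm_num : ¬ ((1:I):ℝ) ≤ 2/3)]
    have h3 : (3:ℝ) - 3*((1:I):ℝ) = 0 := by norm_num
    rw [h3, pr0, K'0]
    show Q 1 p = Htil (1, Φ' p)
    rw [hQ]
    show (if ((1:I) : ℝ) ≤ 1/2 then G (pr (2*(1:I)), p) else Htil (pr (2*(1:I) - 1), Φ' p))
      = Htil (1, Φ' p)
    rw [if_neg (by norm_num : ¬ ((1:I):ℝ) ≤ 1/2)]
    have h2 : (2:ℝ)*((1:I):ℝ) - 1 = 1 := by norm_num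
    rw [h2, pr1]
  exact ⟨Φ, Φ', H, H', Φ_cont, Φ'_cont, H_cont, H'_cont, fun e => rfl, Φ'π, Hπ,
    fun t p => rfl, H0', H1', H'0, H'1⟩
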